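/- Let f : I → [0,1] be nonnegative numbers with Σ_{x∈I} f_x ≤ 1, let g_x = Σ_{y≠x} f_y, and assume the sandwich inequality f_x ≤ v(p_{xy}) ≤ g_y for all distinct x, y ∈ I. Let the initial valuation have v(s_x) = f_x and v(¬s_x) = g_x for all x. Then the upper revised valuation v* satisfies: v*(s_x) = min over z ≠ x of g_z; v*(¬s_x) = g_x; and v*(p_{xy}) = max( v(p_{xy}), min over z ≠ x of g_z ) for all distinct x, y. -/
import Mathlib


/-- A valuation for the supremacy doctrine: degrees of belief for the literals
`s_x` ("x is supreme"), `¬s_x`, and `p_{xy}` ("x is preferable to y", for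
distinct `x, y`), under the identification `¬p_{xy} = p_{yx}`. -/
structure SVal (I : Type*) where
  s : I → ℝ
  ns : I → ℝ
  p : I → I → ℝ

/-- Max over a (possibly empty) index set of reals: the empty max is `0`
(note `Real.sSup_empty = 0`). -/
noncomputable def sup0 (S : Set ℝ) : ℝ := sSup S

open Classical in
/-- Min over a (possibly empty) index set of reals: the empty min is `1`. -/
noncomputable def inf1 (S : Set ℝ) : ℝ := if S.Nonempty then sInf S else 1

/-- The one-step revision operator associated with the supremacy doctrine. -/
noncomputable def Tsup {I : Type*} (v : SVal I) : SVal I where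
  s := fun x => max (v.s x)
    (max (inf1 {b : ℝ | ∃ y, y ≠ x ∧ b = v.ns y})
         (inf1 {b : ℝ | ∃ y, y ≠ x ∧ b = v.p x y}))
  ns := fun x => max (v.ns x) (sup0 {b : ℝ | ∃ y, y ≠ x ∧ b = v.p y x})
  p := fun x y => max (v.p x y)
    (max (v.s x)
         (min (v.ns y) (inf1 {b : ℝ | ∃ z, z ≠ x ∧ z ≠ y ∧ b = v.p y z})))

/- ---------- auxiliary lemmas ---------- -/

lemma bdd_of_range {I : Type*} [Finite I] (F : I → ℝ) {S : Set ℝ}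
    (h : ∀ b ∈ S, ∃ y, b = F y) : BddBelow S :=
  (Set.finite_range F).bddBelow.mono (fun b hb => (h b hb).imp fun _ hy => hy.symm)

lemma inf1_le {S : Set ℝ} (hb : BddBelow S) {a : ℝ} (ha : a ∈ S) : inf1 S ≤ a := by
  rw [inf1, if_pos ⟨a, ha⟩]; exact csInf_le hb ha

lemma le_inf1 {S : Set ℝ} {c : ℝ} (h1 : c ≤ 1) (h : ∀ a ∈ S, c ≤ a) : c ≤ inf1 S := by
  rw [inf1]; split
  · exact le_csInf (by assumption) h
  · exact h1

lemma sup0_le {S : Set ℝ} {c : ℝ} (h0 : 0 ≤ c) (h : ∀ a ∈ S, a ≤ c) : sup0 S ≤ c :=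
  Real.sSup_le h h0

/-- Plurality: with initial beliefs `v(s_x) = f_x` (plurality fraction) and
`v(¬s_x) = g_x = Σ_{y ≠ x} f_y` (antiplurality fraction), and the sandwich
inequality `f_x ≤ v(p_{xy}) ≤ g_y`, the upper revised valuation of the
supremacy doctrine is given in terms of the `g_z`. -/
theorem stmt8 {I : Type*} [Fintype I] [DecidableEq I]
    (hcard : 2 ≤ Fintype.card I)
    (v : SVal I)
    (f g : I → ℝ)
    (hf0 : ∀ x, 0 ≤ f x) (hf1 : ∀ x, f x ≤ 1) (hfsum : ∑ x, f x ≤ 1)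
    (hg : ∀ x, g x = ∑ y ∈ Finset.univ.erase x, f y)
    (hsandwich : ∀ x y : I, x ≠ y → f x ≤ v.p x y ∧ v.p x y ≤ g y)
    (hs : ∀ x, v.s x = f x) (hns : ∀ x, v.ns x = g x)
    (vstar : SVal I) (hstar : ∃ N : ℕ, ∀ n ≥ N, Tsup^[n] v = vstar) :
    (∀ x, vstar.s x = inf1 {b : ℝ | ∃ z, z ≠ x ∧ b = g z}) ∧
    (∀ x, vstar.ns x = g x) ∧
    (∀ x y : I, x ≠ y →
      vstar.p x y = max (v.p x y) (inf1 {b : ℝ | ∃ z, z ≠ x ∧ b = g z})) := by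
  classical
  -- basic facts about f and g
  have hfg : ∀ x y : I, x ≠ y → f x ≤ g y := by
    intro x y hxy
    rw [hg]
    exact Finset.single_le_sum (fun i _ => hf0 i)
      (Finset.mem_erase.2 ⟨hxy, Finset.mem_univ x⟩)
  have hg0 : ∀ x, 0 ≤ g x := by
    intro x; rw [hg]; exact Finset.sum_nonneg fun i _ => hf0 i
  have hg1 : ∀ x, g x ≤ 1 := by
    intro x; rw [hg]
    calc ∑ y ∈ Finset.univ.erase x, f y ≤ ∑ y, f y :=
          Finset.sum_le_sum_of_subset_of_nonneg (Finset.erase_subset _ _)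
            (fun i _ _ => hf0 i)
      _ ≤ 1 := hfsum
  have hex : ∀ x : I, ∃ y : I, y ≠ x :=
    fun x => Fintype.exists_ne_of_one_lt_card (by omega) x
  set m : I → ℝ := fun x => inf1 {b : ℝ | ∃ z, z ≠ x ∧ b = g z} with hm
  have hmdef : ∀ x, inf1 {b : ℝ | ∃ z, z ≠ x ∧ b = g z} = m x := fun x => by rw [hm]
  have hbddg : ∀ x : I, BddBelow {b : ℝ | ∃ z, z ≠ x ∧ b = g z} := fun x =>
    bdd_of_range g (by rintro b ⟨z, _, rfl⟩; exact ⟨z, rfl⟩)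
  have hmle : ∀ x z : I, z ≠ x → m x ≤ g z := fun x z hz => by
    rw [hm]; exact inf1_le (hbddg x) ⟨z, hz, rfl⟩
  have le_m : ∀ (c : ℝ) (x : I), c ≤ 1 → (∀ z, z ≠ x → c ≤ g z) → c ≤ m x := by
    intro c x h1 h
    rw [hm]
    exact le_inf1 h1 (by rintro a ⟨z, hz, rfl⟩; exact h z hz)
  have hm1 : ∀ x, m x ≤ 1 := by
    intro x
    obtain ⟨y, hy⟩ := hex x
    exact (hmle x y hy).trans (hg1 y)
  have hfm : ∀ x, f x ≤ m x := fun x =>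
    le_m (f x) x (hf1 x) (fun z hz => hfg x z (Ne.symm hz))
  -- the step: Q u → P (Tsup u)
  have hQstep : ∀ u : SVal I,
      ((∀ x, u.s x = m x) ∧ (∀ x, u.ns x = g x) ∧
        (∀ x y : I, x ≠ y →
          v.p x y ≤ u.p x y ∧ u.p x y ≤ g y ∧ u.p x y ≤ max (v.p x y) (m x))) →
      ((∀ x, (Tsup u).s x = m x) ∧ (∀ x, (Tsup u).ns x = g x) ∧
        (∀ x y : I, x ≠ y → (Tsup u).p x y = max (v.p x y) (m x))) := by
    rintro u ⟨h1, h2, h3⟩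
    refine ⟨?_, ?_, ?_⟩
    · intro x
      show max (u.s x)
        (max (inf1 {b : ℝ | ∃ y, y ≠ x ∧ b = u.ns y})
             (inf1 {b : ℝ | ∃ y, y ≠ x ∧ b = u.p x y})) = m x
      simp only [h2]
      rw [h1 x, hmdef x]
      have hbB : BddBelow {b : ℝ | ∃ y, y ≠ x ∧ b = u.p x y} :=
        bdd_of_range (u.p x) (by rintro b ⟨z, _, rfl⟩; exact ⟨z, rfl⟩)
      have hB : inf1 {b : ℝ | ∃ y, y ≠ x ∧ b = u.p x y} ≤ m x := by
        apply le_m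
        · obtain ⟨y, hy⟩ := hex x
          exact (inf1_le hbB ⟨y, hy, rfl⟩).trans
            (((h3 x y (Ne.symm hy)).2.1).trans (hg1 y))
        · intro z hz
          exact (inf1_le hbB ⟨z, hz, rfl⟩).trans ((h3 x z (Ne.symm hz)).2.1)
      rw [max_eq_left hB, max_self]
    · intro x
      show max (u.ns x) (sup0 {b : ℝ | ∃ y, y ≠ x ∧ b = u.p y x}) = g x
      rw [h2 x, max_eq_left]
      apply sup0_le (hg0 x)
      rintro a ⟨z, hz, rfl⟩
      exact (h3 z x hz).2.1
    · intro x y hxy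
      show max (u.p x y)
        (max (u.s x)
          (min (u.ns y)
            (inf1 {b : ℝ | ∃ z, z ≠ x ∧ z ≠ y ∧ b = u.p y z}))) = max (v.p x y) (m x)
      rw [h1 x, h2 y]
      have hbC : BddBelow {b : ℝ | ∃ z, z ≠ x ∧ z ≠ y ∧ b = u.p y z} :=
        bdd_of_range (u.p y) (by rintro b ⟨z, _, _, rfl⟩; exact ⟨z, rfl⟩)
      have hmin :
          min (g y) (inf1 {b : ℝ | ∃ z, z ≠ x ∧ z ≠ y ∧ b = u.p y z}) ≤ m x := by
        apply le_m
        · exact (min_le_left _ _).trans (hg1 y)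
        · intro z hz
          by_cases hzy : z = y
          · subst hzy; exact min_le_left _ _
          · exact (min_le_right _ _).trans
              ((inf1_le hbC ⟨z, hz, hzy, rfl⟩).trans ((h3 y z (Ne.symm hzy)).2.1))
      rw [max_eq_left hmin]
      obtain ⟨hl, _, hu⟩ := h3 x y hxy
      exact le_antisymm (max_le hu (le_max_right _ _))
        (max_le (hl.trans (le_max_left _ _)) (le_max_right _ _))
  -- P implies Q
  have hPQ : ∀ u : SVal I,
      ((∀ x, u.s x = m x) ∧ (∀ x, u.ns x = g x) ∧
        (∀ x y : I, x ≠ y → u.p x y = max (v.p x y) (m x))) →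
      ((∀ x, u.s x = m x) ∧ (∀ x, u.ns x = g x) ∧
        (∀ x y : I, x ≠ y →
          v.p x y ≤ u.p x y ∧ u.p x y ≤ g y ∧ u.p x y ≤ max (v.p x y) (m x))) := by
    rintro u ⟨h1, h2, h3⟩
    refine ⟨h1, h2, fun x y hxy => ?_⟩
    rw [h3 x y hxy]
    exact ⟨le_max_left _ _,
      max_le (hsandwich x y hxy).2 (hmle x y (Ne.symm hxy)), le_rfl⟩
  -- the base: Q (Tsup v)
  have hQbase :
      (∀ x, (Tsup v).s x = m x) ∧ (∀ x, (Tsup v).ns x = g x) ∧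
        (∀ x y : I, x ≠ y →
          v.p x y ≤ (Tsup v).p x y ∧ (Tsup v).p x y ≤ g y ∧
            (Tsup v).p x y ≤ max (v.p x y) (m x)) := by
    refine ⟨?_, ?_, ?_⟩
    · intro x
      show max (v.s x)
        (max (inf1 {b : ℝ | ∃ y, y ≠ x ∧ b = v.ns y})
             (inf1 {b : ℝ | ∃ y, y ≠ x ∧ b = v.p x y})) = m x
      simp only [hns]
      rw [hs x, hmdef x]
      have hbB : BddBelow {b : ℝ | ∃ y, y ≠ x ∧ b = v.p x y} :=
        bdd_of_range (v.p x) (by rintro b ⟨z, _, rfl⟩; exact ⟨z, rfl⟩)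
      have hB : inf1 {b : ℝ | ∃ y, y ≠ x ∧ b = v.p x y} ≤ m x := by
        apply le_m
        · obtain ⟨y, hy⟩ := hex x
          exact (inf1_le hbB ⟨y, hy, rfl⟩).trans
            ((hsandwich x y (Ne.symm hy)).2.trans (hg1 y))
        · intro z hz
          exact (inf1_le hbB ⟨z, hz, rfl⟩).trans (hsandwich x z (Ne.symm hz)).2
      rw [max_eq_left hB, max_eq_right (hfm x)]
    · intro x
      show max (v.ns x) (sup0 {b : ℝ | ∃ y, y ≠ x ∧ b = v.p y x}) = g x
      rw [hns x, max_eq_left]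
      apply sup0_le (hg0 x)
      rintro a ⟨z, hz, rfl⟩
      exact (hsandwich z x hz).2
    · intro x y hxy
      have hshow : (Tsup v).p x y = max (v.p x y)
          (max (v.s x)
            (min (v.ns y)
              (inf1 {b : ℝ | ∃ z, z ≠ x ∧ z ≠ y ∧ b = v.p y z}))) := rfl
      rw [hshow, hs x, hns y]
      have hbC : BddBelow {b : ℝ | ∃ z, z ≠ x ∧ z ≠ y ∧ b = v.p y z} :=
        bdd_of_range (v.p y) (by rintro b ⟨z, _, _, rfl⟩; exact ⟨z, rfl⟩)
      have hmin :
          min (g y) (inf1 {b : ℝ | ∃ z, z ≠ x ∧ z ≠ y ∧ b = v.p y z}) ≤ m x := by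
        apply le_m
        · exact (min_le_left _ _).trans (hg1 y)
        · intro z hz
          by_cases hzy : z = y
          · subst hzy; exact min_le_left _ _
          · exact (min_le_right _ _).trans
              ((inf1_le hbC ⟨z, hz, hzy, rfl⟩).trans (hsandwich y z (Ne.symm hzy)).2)
      refine ⟨le_max_left _ _, ?_, ?_⟩
      · exact max_le (hsandwich x y hxy).2
          (max_le (hfg x y hxy) (min_le_left _ _))
      · exact max_le (le_max_left _ _)
          (max_le ((hfm x).trans (le_max_right _ _)) (hmin.trans (le_max_right _ _)))
  -- induction: P holds from step 2 on
  have hiter : ∀ n : ℕ,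
      (∀ x, (Tsup^[n + 2] v).s x = m x) ∧ (∀ x, (Tsup^[n + 2] v).ns x = g x) ∧
        (∀ x y : I, x ≠ y → (Tsup^[n + 2] v).p x y = max (v.p x y) (m x)) := by
    intro n
    induction n with
    | zero =>
      have h2 : Tsup^[0 + 2] v = Tsup (Tsup v) := by
        rw [Function.iterate_succ_apply', Function.iterate_succ_apply',
          Function.iterate_zero_apply]
      rw [h2]
      exact hQstep _ hQbase
    | succ k ih =>
      have h2 : Tsup^[k + 1 + 2] v = Tsup (Tsup^[k + 2] v) := by
        rw [show k + 1 + 2 = (k + 2) + 1 by ring, Function.iterate_succ_apply']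
      rw [h2]
      exact hQstep _ (hPQ _ ih)
  obtain ⟨N, hN⟩ := hstar
  have hv : vstar = Tsup^[N + 2] v := (hN (N + 2) (by omega)).symm
  obtain ⟨h1, h2, h3⟩ := hiter N
  subst hv
  refine ⟨fun x => ?_, h2, fun x y hxy => ?_⟩
  · rw [h1 x, hmdef x]
  · rw [h3 x y hxy, hmdef x]
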